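/- Let I₁, I₂ be open intervals and g₁, h₁ : I₁ → ℝ, g₂, h₂ : I₂ → ℝ differentiable functions such that for all (t₁, t₂) ∈ I₁ × I₂: g₁(t₁) ≠ g₂(t₂), h₁(t₁) ≠ h₂(t₂), and suppose at a point (t₁, t₂) the products g₁'(t₁)·g₂'(t₂) and h₁'(t₁)·h₂'(t₂) are both nonzero and have opposite signs; set η = sign(g₁'(t₁)·g₂'(t₂)) ∈ {1, −1}. Define, at (t₁, t₂): K = (8·√(|g₁'h₁'g₂'h₂'|)/|(g₁ − g₂)(h₁ − h₂)|)·(g₁'g₂'/(g₁ − g₂)² + h₁'h₂'/(h₁ − h₂)²), κ = (8·√(|g₁'h₁'g₂'h₂'|)/|(g₁ − g₂)(h₁ − h₂)|)·(g₁'g₂'/(g₁ − g₂)² − h₁'h₂'/(h₁ − h₂)²), A = 4·|g₁'g₂'|/(g₁ − g₂)², B = 4·|h₁'h₂'|/(h₁ − h₂)². Then K = η·√(A·B)·(A − B)/2 and κ = η·√(A·B)·(A + B)/2; in particular the sign of κ equals η. -/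

import Mathlib

noncomputable section

lemma pos_of_sign_eq_one {x : ℝ} (h : Real.sign x = 1) : 0 < x := by
  rcases lt_trichotomy x 0 with hx | hx | hx
  · rw [Real.sign_of_neg hx] at h; norm_num at h
  · rw [hx, Real.sign_zero] at h; norm_num at h
  · exact hx

lemma neg_of_sign_eq_neg_one {x : ℝ} (h : Real.sign x = -1) : x < 0 := by
  rcases lt_trichotomy x 0 with hx | hx | hx
  · exact hx
  · rw [hx, Real.sign_zero] at h; norm_num at h
  · rw [Real.sign_of_pos hx] at h; norm_num at h

/-- For a minimal Lorentz surface of third type in ℝ⁴₂ (canonical Weierstrass data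
g₁,h₁,g₂,h₂ with g₁'g₂' and h₁'h₂' nonzero of opposite signs, η = sign(g₁'g₂')), the
Gauss curvature K and normal curvature κ are expressed through A = √|K_g| and
B = √|K_h| as K = η√(AB)(A−B)/2 and κ = η√(AB)(A+B)/2; in particular sign κ = η. -/
theorem stmt_19 (I₁ I₂ : Set ℝ) (hI₁ : IsOpen I₁) (hI₂ : IsOpen I₂)
    (g₁ h₁ g₂ h₂ : ℝ → ℝ)
    (hg₁ : DifferentiableOn ℝ g₁ I₁) (hh₁ : DifferentiableOn ℝ h₁ I₁)
    (hg₂ : DifferentiableOn ℝ g₂ I₂) (hh₂ : DifferentiableOn ℝ h₂ I₂)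
    (hgg : ∀ t₁ ∈ I₁, ∀ t₂ ∈ I₂, g₁ t₁ ≠ g₂ t₂)
    (hhh : ∀ t₁ ∈ I₁, ∀ t₂ ∈ I₂, h₁ t₁ ≠ h₂ t₂)
    (t₁ t₂ : ℝ) (ht₁ : t₁ ∈ I₁) (ht₂ : t₂ ∈ I₂)
    (hg' : deriv g₁ t₁ * deriv g₂ t₂ ≠ 0)
    (hh' : deriv h₁ t₁ * deriv h₂ t₂ ≠ 0)
    (η : ℝ) (hη : η = 1 ∨ η = -1)
    (hsg : Real.sign (deriv g₁ t₁ * deriv g₂ t₂) = η)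
    (hsh : Real.sign (deriv h₁ t₁ * deriv h₂ t₂) = -η)
    (K κ A B : ℝ)
    (hK : K = 8 * Real.sqrt |deriv g₁ t₁ * deriv h₁ t₁ * deriv g₂ t₂ * deriv h₂ t₂| /
        |(g₁ t₁ - g₂ t₂) * (h₁ t₁ - h₂ t₂)| *
        (deriv g₁ t₁ * deriv g₂ t₂ / (g₁ t₁ - g₂ t₂) ^ 2 +
         deriv h₁ t₁ * deriv h₂ t₂ / (h₁ t₁ - h₂ t₂) ^ 2))
    (hκ : κ = 8 * Real.sqrt |deriv g₁ t₁ * deriv h₁ t₁ * deriv g₂ t₂ * deriv h₂ t₂| /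
        |(g₁ t₁ - g₂ t₂) * (h₁ t₁ - h₂ t₂)| *
        (deriv g₁ t₁ * deriv g₂ t₂ / (g₁ t₁ - g₂ t₂) ^ 2 -
         deriv h₁ t₁ * deriv h₂ t₂ / (h₁ t₁ - h₂ t₂) ^ 2))
    (hA : A = 4 * |deriv g₁ t₁ * deriv g₂ t₂| / (g₁ t₁ - g₂ t₂) ^ 2)
    (hB : B = 4 * |deriv h₁ t₁ * deriv h₂ t₂| / (h₁ t₁ - h₂ t₂) ^ 2) :
    K = η * Real.sqrt (A * B) * (A - B) / 2 ∧
    κ = η * Real.sqrt (A * B) * (A + B) / 2 ∧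
    Real.sign κ = η := by
  set a := deriv g₁ t₁ * deriv g₂ t₂ with ha
  set b := deriv h₁ t₁ * deriv h₂ t₂ with hb
  set p := g₁ t₁ - g₂ t₂ with hpdef
  set q := h₁ t₁ - h₂ t₂ with hqdef
  have hp : p ≠ 0 := sub_ne_zero.mpr (hgg t₁ ht₁ t₂ ht₂)
  have hq : q ≠ 0 := sub_ne_zero.mpr (hhh t₁ ht₁ t₂ ht₂)
  have hpq : |p * q| ≠ 0 := by
    simpa [abs_eq_zero] using mul_ne_zero hp hq
  have habs : |deriv g₁ t₁ * deriv h₁ t₁ * deriv g₂ t₂ * deriv h₂ t₂| = |a * b| := by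
    rw [ha, hb]; congr 1; ring
  rw [habs] at hK hκ
  -- sqrt(A*B) computation
  have hABsq : A * B = (4 * Real.sqrt |a * b| / |p * q|) ^ 2 := by
    rw [hA, hB, div_pow, mul_pow, Real.sq_sqrt (abs_nonneg _), sq_abs, mul_pow]
    simp only [abs_mul]
    field_simp
  have sab : Real.sqrt (A * B) = 4 * Real.sqrt |a * b| / |p * q| := by
    rw [hABsq, Real.sqrt_sq (by positivity)]
  have hApos : 0 < A := by
    rw [hA]
    have : 0 < |a| := abs_pos.mpr hg'
    positivity
  have hBpos : 0 < B := by
    rw [hB]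
    have : 0 < |b| := abs_pos.mpr hh'
    positivity
  have hCpos : 0 < Real.sqrt (A * B) * (A + B) / 2 := by
    have h1 : 0 < Real.sqrt (A * B) := Real.sqrt_pos.mpr (by positivity)
    positivity
  rcases hη with hη1 | hη1 <;> subst hη1
  · have hapos : 0 < a := pos_of_sign_eq_one hsg
    have hbneg : b < 0 := neg_of_sign_eq_neg_one (by simpa using hsh)
    rw [abs_of_pos hapos] at hA
    rw [abs_of_neg hbneg] at hB
    have hκ' : κ = 1 * Real.sqrt (A * B) * (A + B) / 2 := by
      rw [hκ, sab, hA, hB]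
      field_simp
      ring
    refine ⟨?_, hκ', ?_⟩
    · rw [hK, sab, hA, hB]
      field_simp
      ring
    · rw [hκ']
      rw [one_mul] at *
      exact Real.sign_of_pos (by simpa using hCpos)
  · have haneg : a < 0 := neg_of_sign_eq_neg_one hsg
    have hbpos : 0 < b := pos_of_sign_eq_one (by simpa using hsh)
    rw [abs_of_neg haneg] at hA
    rw [abs_of_pos hbpos] at hB
    have hκ' : κ = -1 * Real.sqrt (A * B) * (A + B) / 2 := by
      rw [hκ, sab, hA, hB]
      field_simp
      ring
    refine ⟨?_, hκ', ?_⟩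
    · rw [hK, sab, hA, hB]
      field_simp
      ring
    · rw [hκ']
      have : -1 * Real.sqrt (A * B) * (A + B) / 2 < 0 := by linarith
      exact Real.sign_of_neg this
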